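/- Fix a column Cᵢ of an HHL filling and let Ĉ be the root left column for Cᵢ. If ĈCᵢ satisfies the Non-overlapping Condition, then inv(ĈCᵢT') = inv(CᵢT') + N̂(i), where N̂(i) = Σ_{j=1}^{p} N_{b_j,d_j}[C_{i,<r(b_j)} ∩ Ĉ] counts, over all pivot rows j, the entries of Cᵢ lying strictly above the pivot row r(b_j) that also appear in Ĉ and lie strictly between b_j and d_j; here T' is the filling consisting of the columns to the right of Cᵢ and inv is the HHL inversion statistic. -/
import Mathlib


/-- The HHL inversion statistic of the filling consisting of columns
`s, s+1, …, m-1` of `σ`: triples `((j,k),i)` recording cells `u = (j,k)` and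
`v = (i,k+1)` with `i < j`, `σ(u) < σ(v)`, and `σ(v) < σ(w)` for `w` the right
neighbor of `u` when it exists. -/
noncomputable def invFrom (σ : ℕ → ℕ → ℕ) (colLen : ℕ → ℕ) (m s : ℕ) : ℕ :=
  Set.ncard {q : (ℕ × ℕ) × ℕ |
    s ≤ q.1.2 ∧ q.1.2 + 1 < m ∧ q.1.1 < colLen q.1.2 ∧
    q.2 < colLen (q.1.2 + 1) ∧ q.2 < q.1.1 ∧
    σ q.1.1 q.1.2 < σ q.2 (q.1.2 + 1) ∧
    (q.1.1 < colLen (q.1.2 + 1) → σ q.2 (q.1.2 + 1) < σ q.1.1 (q.1.2 + 1))}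

/-- Row `r` is a pivot row of the two leftmost columns `0` and `1` of the
filling `σ`: either the row lies below the bottom of column `1`, or the entry
in column `0` is strictly less than the entry in column `1`. -/
def PivotRow01 (colLen : ℕ → ℕ) (σ : ℕ → ℕ → ℕ) (r : ℕ) : Prop :=
  r < colLen 0 ∧ (colLen 1 ≤ r ∨ σ r 0 < σ r 1)

/-- The Non-overlapping Condition for the two leftmost columns: no two distinct
pivot rows have intersecting pivot intervals `[b_j, d_j]` (`d_j = ∞` when the
right entry is absent). -/
def NonOverlap01 (colLen : ℕ → ℕ) (σ : ℕ → ℕ → ℕ) : Prop :=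
  ¬ ∃ r r' : ℕ, PivotRow01 colLen σ r ∧ PivotRow01 colLen σ r' ∧ r ≠ r' ∧
    ∃ z : ℕ, σ r 0 ≤ z ∧ (r < colLen 1 → z ≤ σ r 1) ∧
      σ r' 0 ≤ z ∧ (r' < colLen 1 → z ≤ σ r' 1)

/-- Column `0` is the root column for column `1`: common entries matched
row-by-row, distinct entries paired in relative order, and any row of column
`0` below the bottom of column `1` carries the largest distinct entry. -/
def IsRoot01 (colLen : ℕ → ℕ) (σ : ℕ → ℕ → ℕ) : Prop :=
  (∀ r < colLen 0, ∀ r' < colLen 1, σ r 0 = σ r' 1 → r = r') ∧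
  (∀ r < colLen 0, ∀ r' < colLen 0, r < colLen 1 → r' < colLen 1 →
    (∀ s < colLen 1, σ r 0 ≠ σ s 1) → (∀ s < colLen 1, σ r' 0 ≠ σ s 1) →
    (σ r 0 < σ r' 0 ↔ σ r 1 < σ r' 1)) ∧
  (∀ r, r = colLen 1 → r < colLen 0 →
    ∀ r' < colLen 0, (∀ s < colLen 1, σ r' 0 ≠ σ s 1) → σ r' 0 ≤ σ r 0)

/-- `N̂`: over all pivot rows `r`, the number of rows `r' < r` whose entry in
column `1` also appears in column `0` and lies strictly between the pivot
entries `b = σ r 0` and `d = σ r 1` (no upper constraint when `d` is absent). -/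
noncomputable def Nhat01 (colLen : ℕ → ℕ) (σ : ℕ → ℕ → ℕ) : ℕ :=
  Set.ncard {p : ℕ × ℕ | PivotRow01 colLen σ p.1 ∧ p.2 < p.1 ∧ p.2 < colLen 1 ∧
    (∃ r < colLen 0, σ r 0 = σ p.2 1) ∧ σ p.1 0 < σ p.2 1 ∧
    (p.1 < colLen 1 → σ p.2 1 < σ p.1 1)}

/-- Lemma 4.6: if the leftmost column of the filling is the root column for its
neighbor and the Non-overlapping Condition holds, then
`inv(ĈCᵢT') = inv(CᵢT') + N̂(i)`. -/
theorem inv_of_root_column (m n : ℕ) (hm : 2 ≤ m) (colLen : ℕ → ℕ)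
    (σ : ℕ → ℕ → ℕ)
    (hanti : ∀ j, j + 1 < m → colLen (j + 1) ≤ colLen j)
    (hvals : ∀ j < m, ∀ i < colLen j, σ i j ∈ Finset.Icc 1 n)
    (hrow : ∀ j, j + 1 < m → ∀ i < colLen (j + 1), σ i j ≤ σ i (j + 1))
    (hcol : ∀ j < m, ∀ i i', i < i' → i' < colLen j → σ i j ≠ σ i' j)
    (hatt : ∀ j, j + 1 < m → ∀ i i', i' < i → i < colLen j → i' < colLen (j + 1) →
      σ i j ≠ σ i' (j + 1))
    (hroot : IsRoot01 colLen σ)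
    (hno : NonOverlap01 colLen σ) :
    invFrom σ colLen m 0 = invFrom σ colLen m 1 + Nhat01 colLen σ := by
  classical
  have hm1 : (1:ℕ) < m := hm
  -- Key: every k=0 inversion pair is a Nhat pair
  have hkey : ∀ j i : ℕ, j < colLen 0 → i < colLen 1 → i < j → σ j 0 < σ i 1 →
      (j < colLen 1 → σ i 1 < σ j 1) →
      (PivotRow01 colLen σ j ∧ i < j ∧ i < colLen 1 ∧
        (∃ r < colLen 0, σ r 0 = σ i 1) ∧ σ j 0 < σ i 1 ∧
        (j < colLen 1 → σ i 1 < σ j 1)) := by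
    intro j i hj hi hij hlt hcond
    have hpj : PivotRow01 colLen σ j := by
      refine ⟨hj, ?_⟩
      rcases lt_or_ge j (colLen 1) with h | h
      · exact Or.inr (lt_trans hlt (hcond h))
      · exact Or.inl h
    refine ⟨hpj, hij, hi, ?_, hlt, hcond⟩
    by_contra hex
    push_neg at hex
    have hi0 : i < colLen 0 := lt_of_lt_of_le hi (hanti 0 hm1)
    have hle : σ i 0 ≤ σ i 1 := hrow 0 hm1 i hi
    have hne : σ i 0 ≠ σ i 1 := fun h => hex i hi0 h
    have hpi : PivotRow01 colLen σ i := ⟨hi0, Or.inr (lt_of_le_of_ne hle hne)⟩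
    exact hno ⟨i, j, hpi, hpj, Nat.ne_of_lt hij,
      σ i 1, hle, fun _ => le_refl _, le_of_lt hlt, fun h => le_of_lt (hcond h)⟩
  -- abbreviations for the three sets
  set A : Set ((ℕ × ℕ) × ℕ) := {q | 0 ≤ q.1.2 ∧ q.1.2 + 1 < m ∧ q.1.1 < colLen q.1.2 ∧
    q.2 < colLen (q.1.2 + 1) ∧ q.2 < q.1.1 ∧
    σ q.1.1 q.1.2 < σ q.2 (q.1.2 + 1) ∧
    (q.1.1 < colLen (q.1.2 + 1) → σ q.2 (q.1.2 + 1) < σ q.1.1 (q.1.2 + 1))} with hA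
  set B : Set ((ℕ × ℕ) × ℕ) := {q | 1 ≤ q.1.2 ∧ q.1.2 + 1 < m ∧ q.1.1 < colLen q.1.2 ∧
    q.2 < colLen (q.1.2 + 1) ∧ q.2 < q.1.1 ∧
    σ q.1.1 q.1.2 < σ q.2 (q.1.2 + 1) ∧
    (q.1.1 < colLen (q.1.2 + 1) → σ q.2 (q.1.2 + 1) < σ q.1.1 (q.1.2 + 1))} with hB
  set C : Set ((ℕ × ℕ) × ℕ) := {q | q.1.2 = 0 ∧ q.1.2 + 1 < m ∧ q.1.1 < colLen q.1.2 ∧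
    q.2 < colLen (q.1.2 + 1) ∧ q.2 < q.1.1 ∧
    σ q.1.1 q.1.2 < σ q.2 (q.1.2 + 1) ∧
    (q.1.1 < colLen (q.1.2 + 1) → σ q.2 (q.1.2 + 1) < σ q.1.1 (q.1.2 + 1))} with hC
  set N : Set (ℕ × ℕ) := {p : ℕ × ℕ | PivotRow01 colLen σ p.1 ∧ p.2 < p.1 ∧ p.2 < colLen 1 ∧
    (∃ r < colLen 0, σ r 0 = σ p.2 1) ∧ σ p.1 0 < σ p.2 1 ∧
    (p.1 < colLen 1 → σ p.2 1 < σ p.1 1)} with hN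
  -- finiteness
  have hBnd : ∀ k, k < m → colLen k ≤ (Finset.range m).sup colLen := fun k hk =>
    Finset.le_sup (Finset.mem_range.mpr hk)
  have hfinA : A.Finite := by
    apply Set.Finite.subset
      (((Set.finite_Iio ((Finset.range m).sup colLen)).prod (Set.finite_Iio m)).prod
        (Set.finite_Iio ((Finset.range m).sup colLen)))
    rintro ⟨⟨j, k⟩, i⟩ ⟨-, h2, h3, h4, -⟩
    dsimp only at h2 h3 h4
    exact ⟨⟨lt_of_lt_of_le h3 (hBnd k (by omega)), Set.mem_Iio.mpr (show k < m by omega)⟩,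
      lt_of_lt_of_le h4 (hBnd _ h2)⟩
  have hBA : B ⊆ A := fun q hq => ⟨Nat.zero_le _, hq.2⟩
  have hCA : C ⊆ A := fun q hq => ⟨Nat.zero_le _, hq.2⟩
  have hfinB : B.Finite := hfinA.subset hBA
  have hfinC : C.Finite := hfinA.subset hCA
  have hsplit : A = B ∪ C := by
    ext q
    constructor
    · rintro ⟨-, h⟩
      rcases Nat.eq_zero_or_pos q.1.2 with h0 | h0
      · exact Or.inr ⟨h0, h⟩
      · exact Or.inl ⟨h0, h⟩
    · rintro (hq | hq)
      · exact hBA hq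
      · exact hCA hq
  have hdisj : Disjoint B C := by
    rw [Set.disjoint_left]
    rintro q ⟨h1, -⟩ ⟨h0, -⟩
    omega
  have hCN : C = (fun p : ℕ × ℕ => ((p.1, 0), p.2)) '' N := by
    ext q
    constructor
    · rintro ⟨h0, h1, h2, h3, h4, h5, h6⟩
      obtain ⟨⟨j, k⟩, i⟩ := q
      simp only at h0
      subst h0
      simp only at h1 h2 h3 h4 h5 h6 ⊢
      refine ⟨(j, i), hkey j i h2 h3 h4 h5 h6, rfl⟩
    · rintro ⟨⟨j, i⟩, ⟨hp, hij, hi, -, hlt, hcond⟩, rfl⟩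
      exact ⟨rfl, hm, hp.1, hi, hij, hlt, hcond⟩
  have hinj : Function.Injective (fun p : ℕ × ℕ => ((p.1, 0), p.2)) := by
    rintro ⟨a, b⟩ ⟨c, d⟩ h
    simp only [Prod.mk.injEq] at h
    simp [h.1.1, h.2]
  calc invFrom σ colLen m 0 = A.ncard := rfl
    _ = B.ncard + C.ncard := by
        rw [hsplit, Set.ncard_union_eq hdisj hfinB hfinC]
    _ = invFrom σ colLen m 1 + Nhat01 colLen σ := by
        congr 1
        rw [hCN, Set.ncard_image_of_injective _ hinj]
        rfl
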